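/- arXiv:1102.1776 — 3 statements merged into one kernel-verified Lean document; each statement's English description precedes it below -/
import Mathlib

section
/- For a 2×2 matrix A with entries in the Hamilton quaternions, rdet₁(A A*) = rdet₁(A* A), where rdet₁ B = b₁₁b₂₂ - b₁₂b₂₁ and A* is the conjugate transpose. -/
set_option maxHeartbeats 2000000 in
lemma key_rdet1_aux (a b c d : Quaternion ℝ) :
    (a * star a + b * star b) * (c * star c + d * star d)
      - (a * star c + b * star d) * (c * star a + d * star b)
    = (star a * a + star c * c) * (star b * b + star d * d)
      - (star a * b + star c * d) * (star b * a + star d * c) := by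
  ext <;>
    simp only [Quaternion.re_mul, Quaternion.imI_mul, Quaternion.imJ_mul, Quaternion.imK_mul,
      Quaternion.re_add, Quaternion.imI_add, Quaternion.imJ_add, Quaternion.imK_add,
      Quaternion.re_sub, Quaternion.imI_sub, Quaternion.imJ_sub, Quaternion.imK_sub,
      Quaternion.re_star, Quaternion.imI_star, Quaternion.imJ_star, Quaternion.imK_star] <;>
    ring

noncomputable def rdet1 (B : Matrix (Fin 2) (Fin 2) (Quaternion ℝ)) : Quaternion ℝ :=
  B 0 0 * B 1 1 - B 0 1 * B 1 0

theorem rdet1_AAstar_eq_rdet1_AstarA (A : Matrix (Fin 2) (Fin 2) (Quaternion ℝ)) :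
    rdet1 (A * A.conjTranspose) = rdet1 (A.conjTranspose * A) := by
  simp only [rdet1, Matrix.mul_apply, Matrix.conjTranspose_apply, Fin.sum_univ_two]
  exact key_rdet1_aux (A 0 0) (A 0 1) (A 1 0) (A 1 1)
end

section
/- For 2×2 matrices A, B over the Hamilton quaternions, ddet(AB) = ddet(A) · ddet(B), where ddet M = rdet₁(M M*) with rdet₁ C = c₁₁c₂₂ - c₁₂c₂₁. -/
noncomputable def ddet (M : Matrix (Fin 2) (Fin 2) (Quaternion ℝ)) : Quaternion ℝ :=
  rdet1 (M * M.conjTranspose)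

open Matrix

noncomputable def phi1 (q : Quaternion ℝ) : Matrix (Fin 2) (Fin 2) ℂ :=
  !![⟨q.re, q.imI⟩, ⟨q.imJ, q.imK⟩; ⟨-q.imJ, q.imK⟩, ⟨q.re, -q.imI⟩]

lemma phi1_mul (p q : Quaternion ℝ) : phi1 (p * q) = phi1 p * phi1 q := by
  ext i j
  fin_cases i <;> fin_cases j <;>
  · rw [Matrix.mul_apply, Fin.sum_univ_two]
    apply Complex.ext <;>
      simp [phi1, Complex.mul_re, Complex.mul_im] <;> ring

lemma phi1_one : phi1 1 = 1 := by
  ext i j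
  fin_cases i <;> fin_cases j <;>
  · apply Complex.ext <;> simp [phi1, Matrix.one_apply, Quaternion.re_one, Quaternion.imI_one, Quaternion.imJ_one, Quaternion.imK_one]

lemma phi1_zero : phi1 0 = 0 := by
  ext i j
  fin_cases i <;> fin_cases j <;>
  · apply Complex.ext <;> simp [phi1, Quaternion.re_zero, Quaternion.imI_zero, Quaternion.imJ_zero, Quaternion.imK_zero]

lemma phi1_add (p q : Quaternion ℝ) : phi1 (p + q) = phi1 p + phi1 q := by
  ext i j
  fin_cases i <;> fin_cases j <;>
  · apply Complex.ext <;> simp [phi1] <;> ring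

noncomputable def phiR : Quaternion ℝ →+* Matrix (Fin 2) (Fin 2) ℂ where
  toFun := phi1
  map_one' := phi1_one
  map_mul' := phi1_mul
  map_zero' := phi1_zero
  map_add' := phi1_add

def e4 : Fin 4 ≃ Fin 2 × Fin 2 := (finProdFinEquiv (m := 2) (n := 2)).symm

noncomputable def Phi (M : Matrix (Fin 2) (Fin 2) (Quaternion ℝ)) : Matrix (Fin 4) (Fin 4) ℂ :=
  ((Matrix.compRingEquiv (Fin 2) (Fin 2) ℂ) (M.map phiR)).submatrix e4 e4

lemma Phi_mul (A B : Matrix (Fin 2) (Fin 2) (Quaternion ℝ)) :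
    Phi (A * B) = Phi A * Phi B := by
  unfold Phi
  rw [Matrix.map_mul, _root_.map_mul, Matrix.submatrix_mul_equiv]

lemma Phi_eq (M : Matrix (Fin 2) (Fin 2) (Quaternion ℝ)) :
    Phi M = !![phi1 (M 0 0) 0 0, phi1 (M 0 0) 0 1, phi1 (M 0 1) 0 0, phi1 (M 0 1) 0 1;
               phi1 (M 0 0) 1 0, phi1 (M 0 0) 1 1, phi1 (M 0 1) 1 0, phi1 (M 0 1) 1 1;
               phi1 (M 1 0) 0 0, phi1 (M 1 0) 0 1, phi1 (M 1 1) 0 0, phi1 (M 1 1) 0 1;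
               phi1 (M 1 0) 1 0, phi1 (M 1 0) 1 1, phi1 (M 1 1) 1 0, phi1 (M 1 1) 1 1] := by
  ext i j
  fin_cases i <;> fin_cases j <;> rfl

lemma det_fin_four (A : Matrix (Fin 4) (Fin 4) ℂ) : A.det =
    A 0 0*A 1 1*A 2 2*A 3 3 - A 0 0*A 1 1*A 2 3*A 3 2 - A 0 0*A 1 2*A 2 1*A 3 3 + A 0 0*A 1 2*A 2 3*A 3 1 + A 0 0*A 1 3*A 2 1*A 3 2 - A 0 0*A 1 3*A 2 2*A 3 1 - A 0 1*A 1 0*A 2 2*A 3 3 + A 0 1*A 1 0*A 2 3*A 3 2 + A 0 1*A 1 2*A 2 0*A 3 3 - A 0 1*A 1 2*A 2 3*A 3 0 - A 0 1*A 1 3*A 2 0*A 3 2 + A 0 1*A 1 3*A 2 2*A 3 0 + A 0 2*A 1 0*A 2 1*A 3 3 - A 0 2*A 1 0*A 2 3*A 3 1 - A 0 2*A 1 1*A 2 0*A 3 3 + A 0 2*A 1 1*A 2 3*A 3 0 + A 0 2*A 1 3*A 2 0*A 3 1 - A 0 2*A 1 3*A 2 1*A 3 0 - A 0 3*A 1 0*A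 2 1*A 3 2 + A 0 3*A 1 0*A 2 2*A 3 1 + A 0 3*A 1 1*A 2 0*A 3 2 - A 0 3*A 1 1*A 2 2*A 3 0 - A 0 3*A 1 2*A 2 0*A 3 1 + A 0 3*A 1 2*A 2 1*A 3 0 := by
  rw [Matrix.det_succ_row_zero]
  simp [Fin.sum_univ_succ, Matrix.det_fin_three, Fin.succAbove]
  norm_num [show (Fin.succ 2 : Fin 4) = 3 from rfl, show (Fin.castSucc 2 : Fin 4) = 2 from rfl,
    show ((1:Fin 4) < 3) from by decide]
  ring

lemma him (M : Matrix (Fin 2) (Fin 2) (Quaternion ℝ)) : (Phi M).det.im = 0 := by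
  rw [Phi_eq, det_fin_four]
  simp [phi1, Matrix.cons_val_zero, Matrix.cons_val_one, Matrix.cons_val_two,
    Matrix.cons_val_three, Matrix.head_cons, Matrix.tail_cons, Complex.mul_im, Complex.mul_re]
  ring

set_option maxHeartbeats 2000000 in
lemma hre (M : Matrix (Fin 2) (Fin 2) (Quaternion ℝ)) :
    ddet M = ((Phi M).det.re : Quaternion ℝ) := by
  rw [Phi_eq, det_fin_four]
  apply Quaternion.ext <;>
  · simp [ddet, rdet1, Matrix.mul_apply, Fin.sum_univ_two, Matrix.conjTranspose_apply, phi1,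
      Matrix.cons_val_zero, Matrix.cons_val_one, Matrix.cons_val_two, Matrix.cons_val_three,
      Matrix.head_cons, Matrix.tail_cons, Complex.mul_re, Complex.mul_im,
      Quaternion.re_mul, Quaternion.imI_mul, Quaternion.imJ_mul, Quaternion.imK_mul,
      Quaternion.re_add, Quaternion.imI_add, Quaternion.imJ_add, Quaternion.imK_add,
      Quaternion.re_sub, Quaternion.imI_sub, Quaternion.imJ_sub, Quaternion.imK_sub]
    ring

theorem ddet_mul (A B : Matrix (Fin 2) (Fin 2) (Quaternion ℝ)) :
    ddet (A * B) = ddet A * ddet B := by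
  rw [hre (A * B), Phi_mul, Matrix.det_mul, hre A, hre B, Complex.mul_re, him, him]
  push_cast
  simp
end

section
/- Let A be a 2×2 matrix over the Hamilton quaternions whose second row is a left scalar multiple of its first row (row₂ = c · row₁ for some quaternion c). Then rdet₁(A*A) = 0. -/
open Quaternion

private lemma coe_left_comm' (r : ℝ) (x y : Quaternion ℝ) :
    x * ((r : Quaternion ℝ) * y) = (r : Quaternion ℝ) * (x * y) := by
  rw [← mul_assoc, ← coe_commutes, mul_assoc]

private lemma key (a b c : Quaternion ℝ) :
    (star a * a + star (c*a)*(c*a)) * (star b * b + star (c*b)*(c*b))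
      - (star a * b + star (c*a)*(c*b)) * (star b * a + star (c*b)*(c*a)) = 0 := by
  obtain ⟨s, hs⟩ : ∃ s : ℝ, star c * c = (s : Quaternion ℝ) := ⟨_, star_mul_eq_coe c⟩
  obtain ⟨na, hna⟩ : ∃ s : ℝ, star a * a = (s : Quaternion ℝ) := ⟨_, star_mul_eq_coe a⟩
  obtain ⟨nb, hnb⟩ : ∃ s : ℝ, star b * b = (s : Quaternion ℝ) := ⟨_, star_mul_eq_coe b⟩
  have hbb : b * star b = (nb : Quaternion ℝ) := by
    rw [← hnb]; ext <;> simp <;> ring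
  have hcs : ∀ x y : Quaternion ℝ, star (c * x) * (c * y) = (s : Quaternion ℝ) * (star x * y) := by
    intro x y
    rw [star_mul, mul_assoc, ← mul_assoc (star c), hs, coe_left_comm']
  have hab : star a * (b * (star b * a)) = ((nb * na : ℝ) : Quaternion ℝ) := by
    rw [← mul_assoc b, hbb, coe_left_comm', hna, ← coe_mul]
  simp only [hcs, hna, hnb, add_mul, mul_add, mul_assoc, coe_mul_eq_smul, mul_smul_comm,
    smul_mul_assoc, smul_smul, hab, smul_coe, ← coe_mul, ← coe_add, ← coe_sub]
  rw [show na * nb + s * (na * nb) + (na * (s * nb) + s * (na * (s * nb))) -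
        (nb * na + s * (nb * na) + (s * (nb * na) + s * (s * (nb * na)))) = 0 by ring,
    Quaternion.coe_zero]

theorem ddet_zero_of_row_dependent (A : Matrix (Fin 2) (Fin 2) (Quaternion ℝ))
    (c : Quaternion ℝ) (h : ∀ j, A 1 j = c * A 0 j) :
    rdet1 (A.conjTranspose * A) = 0 := by
  simp only [rdet1, Matrix.mul_apply, Matrix.conjTranspose_apply, Fin.sum_univ_two, h 0, h 1]
  exact key (A 0 0) (A 0 1) c
end
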